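/- Let f : P → Q be a collapse map of finite posets, and for each q ∈ Q let W_q be a finite poset and h_q : f⁻¹(q) → W_q a collapse map (where the fibre f⁻¹(q) carries the order induced from P). Then there is a unique partial order on the set W := Σ_{q∈Q} W_q such that: (i) the map h : P → W sending p (with f(p) = q) to (q, h_q(p)) is a collapse map; (ii) the map g : W → Q, (q, w) ↦ q, is a collapse map; (iii) g ∘ h = f; and (iv) for each q ∈ Q the inclusion W_q → W, w ↦ (q, w), is a convex order-embedding. -/

import Mathlib

section Defs

variable {α β : Type*}

/-- `f` is monotone from the relation `r` to the relation `s`. -/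
def Mono (r : α → α → Prop) (s : β → β → Prop) (f : α → β) : Prop :=
  ∀ a b, r a b → s (f a) (f b)

/-- A monotone map `f` is convex if whenever `f x ≤ w ≤ f y` there is a unique
`p` with `x ≤ p ≤ y` and `f p = w`. -/
def ConvexMap (r : α → α → Prop) (s : β → β → Prop) (f : α → β) : Prop :=
  Mono r s f ∧ ∀ x y w, s (f x) w → s w (f y) → ∃! p, r x p ∧ r p y ∧ f p = w

/-- A subset `S` is connected (w.r.t. the order relation `r`) if any two of its
elements are joined by a finite zigzag of comparable pairs lying in `S`. -/
def ConnectedIn (r : α → α → Prop) (S : Set α) : Prop :=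
  ∀ x ∈ S, ∀ y ∈ S,
    Relation.ReflTransGen (fun a b => a ∈ S ∧ b ∈ S ∧ (r a b ∨ r b a)) x y

/-- A subset `S` is order-convex w.r.t. `r`. -/
def OrdConvexIn (r : α → α → Prop) (S : Set α) : Prop :=
  ∀ x ∈ S, ∀ y ∈ S, ∀ z, r x z → r z y → z ∈ S

/-- The strict relation associated to `r`. -/
def LtRel (r : α → α → Prop) (a b : α) : Prop := r a b ∧ ¬ r b a

/-- `b` covers `a` w.r.t. `r`. -/
def CovRel (r : α → α → Prop) (a b : α) : Prop :=
  LtRel r a b ∧ ∀ c, ¬ (LtRel r a c ∧ LtRel r c b)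

/-- A contraction: a monotone surjection with connected convex fibres that lifts covers. -/
def IsContraction (r : α → α → Prop) (s : β → β → Prop) (f : α → β) : Prop :=
  Mono r s f ∧ Function.Surjective f ∧
  (∀ q, ConnectedIn r (f ⁻¹' {q}) ∧ OrdConvexIn r (f ⁻¹' {q})) ∧
  ∀ q q', CovRel s q q' → ∃ p p', CovRel r p p' ∧ f p = q ∧ f p' = q'

/-- A collapse map: a monotone surjection which partially reflects the strict order. -/
def IsCollapse (r : α → α → Prop) (s : β → β → Prop) (f : α → β) : Prop :=
  Mono r s f ∧ Function.Surjective f ∧ ∀ x y, LtRel s (f x) (f y) → LtRel r x y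

/-- `r` is a partial order relation. -/
def IsPartialOrderRel (r : α → α → Prop) : Prop :=
  (∀ a, r a a) ∧ (∀ a b c, r a b → r b c → r a c) ∧ (∀ a b, r a b → r b a → a = b)

/-- `r` is a preorder relation. -/
def IsPreorderRel (r : α → α → Prop) : Prop :=
  (∀ a, r a a) ∧ ∀ a b c, r a b → r b c → r a c

/-- The symmetrization `x ∼ y` of a preorder relation. -/
def Sim (r : α → α → Prop) (x y : α) : Prop := r x y ∧ r y x

/-- The quotient preorder `T/T'`: the transitive closure of
`x R y ⟺ (x ≤_T y or y ≤_{T'} x)`. -/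
def QuotRel (r r' : α → α → Prop) : α → α → Prop :=
  Relation.TransGen (fun x y => r x y ∨ r' y x)

/-- The identity-on-objects monotone map of preorders `T' → T` is admissible. -/
def Admissible (r' r : α → α → Prop) : Prop :=
  (∀ x y, r' x y → r x y) ∧
  (∀ Y : Set α, ConnectedIn r' Y → ∀ x ∈ Y, ∀ y ∈ Y, (r x y ↔ r' x y)) ∧
  (∀ x y, Sim (QuotRel r r') x y ↔ Sim (QuotRel r' r') x y)

/-- The identity-on-objects monotone map of preorders `T → V` is a contraction of preorders. -/
def PreContraction (r v : α → α → Prop) : Prop :=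
  (∀ x y, r x y → v x y) ∧
  (∀ x, ConnectedIn r {y | Sim v x y}) ∧
  ∀ a a', CovRel v a a' → ∃ t t', CovRel r t t' ∧ t = a ∧ t' = a'

/-- The setoid on `α` whose relation is the symmetrization of the preorder relation `r`. -/
def simSetoid (r : α → α → Prop) (h : IsPreorderRel r) : Setoid α where
  r := Sim r
  iseqv := ⟨fun x => ⟨h.1 x, h.1 x⟩, fun hxy => ⟨hxy.2, hxy.1⟩,
    fun h1 h2 => ⟨h.2 _ _ _ h1.1 h2.1, h.2 _ _ _ h2.2 h1.2⟩⟩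

/-- The partial order relation on the posetification (antisymmetrization) of a preorder. -/
def posetLe (r : α → α → Prop) (h : IsPreorderRel r) :
    Quotient (simSetoid r h) → Quotient (simSetoid r h) → Prop :=
  Quotient.lift₂ r (fun _ _ _ _ hx hy => propext
    ⟨fun hr => h.2 _ _ _ (h.2 _ _ _ hx.2 hr) hy.1,
     fun hr => h.2 _ _ _ (h.2 _ _ _ hx.1 hr) hy.2⟩)

/-- A tree: a poset with a greatest element in which every interval is linearly ordered. -/
def IsTreeRel (r : α → α → Prop) : Prop :=
  (∃ t, ∀ p, r p t) ∧
  ∀ p p' z w, r p z → r z p' → r p w → r w p' → (r z w ∨ r w z)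

/-- The connected component of `p` w.r.t. the order relation `r`. -/
def component (r : α → α → Prop) (p : α) : Set α :=
  {q | Relation.ReflTransGen (fun a b => r a b ∨ r b a) p q}

/-- A forest: a poset each of whose connected components is a tree. -/
def IsForestRel (r : α → α → Prop) : Prop :=
  ∀ p, IsTreeRel (fun a b : component r p => r a.1 b.1)

end Defs

/-- The conditions required of the glued partial order `le` on `W = Σ q, W q`
(collapse-map version). -/
def GlueCollapseProp {P Q : Type*} [PartialOrder P] [PartialOrder Q]
    (f : P → Q) (W : Q → Type*) [∀ q, PartialOrder (W q)]
    (hmap : ∀ q, {p : P // f p = q} → W q)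
    (le : ((q : Q) × W q) → ((q : Q) × W q) → Prop) : Prop :=
  IsPartialOrderRel le ∧
  -- (i) `h : P → W`, `p ↦ (f p, h_{f p} p)` is a collapse map
  IsCollapse (fun a b : P => a ≤ b) le
    (fun p => ⟨f p, hmap (f p) ⟨p, rfl⟩⟩) ∧
  -- (ii) `g : W → Q`, `(q, w) ↦ q` is a collapse map
  IsCollapse le (fun a b : Q => a ≤ b) (fun w => w.1) ∧
  -- (iii) `g ∘ h = f`
  (∀ p : P, (show (q : Q) × W q from ⟨f p, hmap (f p) ⟨p, rfl⟩⟩).1 = f p) ∧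
  -- (iv) each inclusion `W q → W` is a convex order-embedding
  ∀ q : Q, ConvexMap (fun a b : W q => a ≤ b) le
      (fun w => (⟨q, w⟩ : (q : Q) × W q)) ∧
    ∀ w w' : W q, le ⟨q, w⟩ ⟨q, w'⟩ ↔ w ≤ w'

section GlueAux

variable {P Q : Type*} [PartialOrder P] [PartialOrder Q]

/-- The glued order on `Σ q, W q`. -/
def glueLe (W : Q → Type*) [∀ q, PartialOrder (W q)] :
    ((q : Q) × W q) → ((q : Q) × W q) → Prop :=
  fun x y => x.1 < y.1 ∨ ∃ e : x.1 = y.1, (e ▸ x.2 : W y.1) ≤ y.2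

omit [PartialOrder P] [PartialOrder Q] in
theorem hmap_cast {f : P → Q} {W : Q → Type*} [∀ q, PartialOrder (W q)]
    (hmap : ∀ q, {p : P // f p = q} → W q) (p : P) (q : Q) (e : f p = q) :
    (e ▸ hmap (f p) ⟨p, rfl⟩ : W q) = hmap q ⟨p, e⟩ := by subst e; rfl

omit [PartialOrder P] [PartialOrder Q] in
theorem hmap_le_congr {f : P → Q} {W : Q → Type*} [∀ q, PartialOrder (W q)]
    (hmap : ∀ q, {p : P // f p = q} → W q) (x y : P) (q q' : Q)
    (hx : f x = q) (hy : f y = q) (hx' : f x = q') (hy' : f y = q') :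
    hmap q ⟨x, hx⟩ ≤ hmap q ⟨y, hy⟩ ↔ hmap q' ⟨x, hx'⟩ ≤ hmap q' ⟨y, hy'⟩ := by
  subst hx; subst hx'; exact Iff.rfl

end GlueAux

/-- gluing collapse maps over the fibres of a collapse map of
finite posets: there is a unique suitable partial order on `Σ q, W q`. -/
theorem glue_collapses_unique_order
    {P Q : Type*} [PartialOrder P] [PartialOrder Q] [Fintype P] [Fintype Q]
    (f : P → Q)
    (hf : IsCollapse (fun a b : P => a ≤ b) (fun a b : Q => a ≤ b) f)
    (W : Q → Type*) [∀ q, PartialOrder (W q)] [∀ q, Fintype (W q)]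
    (hmap : ∀ q, {p : P // f p = q} → W q)
    (hcoll : ∀ q, IsCollapse (fun a b : {p : P // f p = q} => a.1 ≤ b.1)
      (fun a b : W q => a ≤ b) (hmap q)) :
    ∃! le : ((q : Q) × W q) → ((q : Q) × W q) → Prop,
      GlueCollapseProp f W hmap le := by
  refine ⟨glueLe W, ⟨?_, ⟨?_, ?_, ?_⟩, ⟨?_, ?_, ?_⟩, fun p => rfl, ?_⟩, ?_⟩
  -- partial order
  · refine ⟨fun a => Or.inr ⟨rfl, le_refl _⟩, ?_, ?_⟩
    · rintro ⟨qa, wa⟩ ⟨qb, wb⟩ ⟨qc, wc⟩ h1 h2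
      rcases h1 with l1 | ⟨e1, he1⟩ <;> rcases h2 with l2 | ⟨e2, he2⟩
      · exact Or.inl (l1.trans l2)
      · obtain rfl : qb = qc := e2; exact Or.inl l1
      · obtain rfl : qa = qb := e1; exact Or.inl l2
      · obtain rfl : qa = qb := e1; obtain rfl : qa = qc := e2
        exact Or.inr ⟨rfl, le_trans he1 he2⟩
    · rintro ⟨qa, wa⟩ ⟨qb, wb⟩ h1 h2
      rcases h1 with l1 | ⟨e1, he1⟩ <;> rcases h2 with l2 | ⟨e2, he2⟩
      · exact absurd (l1.trans l2) (lt_irrefl _)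
      · exact absurd e2 l1.ne'
      · exact absurd e1 l2.ne'
      · obtain rfl : qa = qb := e1
        exact congrArg (Sigma.mk qa) (le_antisymm he1 he2)
  -- h monotone
  · intro p p' hpp'
    rcases (hf.1 p p' hpp').lt_or_eq with hlt | e
    · exact Or.inl hlt
    · refine Or.inr ⟨e, ?_⟩
      rw [hmap_cast hmap p (f p') e]
      exact (hcoll (f p')).1 ⟨p, e⟩ ⟨p', rfl⟩ hpp'
  -- h surjective
  · rintro ⟨q, w⟩
    obtain ⟨⟨p, hp⟩, hw⟩ := (hcoll q).2.1 w
    subst hp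
    exact ⟨p, by rw [← hw]⟩
  -- h reflects strict order
  · rintro x y ⟨h1, h2⟩
    rcases h1 with hlt | ⟨e, he⟩
    · exact hf.2.2 x y ⟨le_of_lt hlt, not_le_of_gt hlt⟩
    · rw [hmap_cast hmap x (f y) e] at he
      have hne : ¬ hmap (f y) ⟨y, rfl⟩ ≤ hmap (f y) ⟨x, e⟩ := by
        intro H
        refine h2 (Or.inr ⟨e.symm, ?_⟩)
        rw [hmap_cast hmap y (f x) e.symm]
        exact (hmap_le_congr hmap y x (f y) (f x) rfl e e.symm rfl).mp H
      exact (hcoll (f y)).2.2 ⟨x, e⟩ ⟨y, rfl⟩ ⟨he, hne⟩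
  -- g monotone
  · rintro x y (hlt | ⟨e, -⟩)
    · exact le_of_lt hlt
    · exact le_of_eq e
  -- g surjective
  · intro q
    obtain ⟨p, hp⟩ := hf.2.1 q
    exact ⟨⟨q, hmap q ⟨p, hp⟩⟩, rfl⟩
  -- g reflects strict order
  · rintro x y ⟨h1, h2⟩
    have hlt : x.1 < y.1 := lt_of_le_not_ge h1 h2
    refine ⟨Or.inl hlt, ?_⟩
    rintro (hlt' | ⟨e, -⟩)
    · exact absurd (hlt.trans hlt') (lt_irrefl _)
    · exact absurd e hlt.ne'
  -- (iv)
  · intro q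
    refine ⟨⟨fun a b hab => Or.inr ⟨rfl, hab⟩, ?_⟩, ?_⟩
    · rintro x y ⟨q', u⟩ h1 h2
      rcases h1 with l1 | ⟨e1, he1⟩
      · rcases h2 with l2 | ⟨e2, he2⟩
        · exact absurd (l1.trans l2) (lt_irrefl _)
        · obtain rfl : q' = q := e2; exact absurd l1 (lt_irrefl _)
      · obtain rfl : q = q' := e1
        rcases h2 with l2 | ⟨e2, he2⟩
        · exact absurd l2 (lt_irrefl _)
        · refine ⟨u, ⟨he1, he2, rfl⟩, ?_⟩
          rintro p' ⟨-, -, hp⟩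
          simpa using hp
    · intro w w'
      constructor
      · rintro (hlt | ⟨e, he⟩)
        · exact absurd hlt (lt_irrefl _)
        · exact he
      · intro h
        exact Or.inr ⟨rfl, h⟩
  -- uniqueness
  · intro le' hle'
    obtain ⟨hpo, hh, hg, hgh, hiv⟩ := hle'
    funext x y
    obtain ⟨q, w⟩ := x
    obtain ⟨q', w'⟩ := y
    apply propext
    constructor
    · intro h
      rcases (hg.1 _ _ h).lt_or_eq with hlt | e
      · exact Or.inl hlt
      · obtain rfl : q = q' := e
        exact Or.inr ⟨rfl, ((hiv q).2 w w').mp h⟩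
    · rintro (hlt | ⟨e, he⟩)
      · exact (hg.2.2 ⟨q, w⟩ ⟨q', w'⟩ ⟨le_of_lt hlt, not_le_of_gt hlt⟩).1
      · obtain rfl : q = q' := e
        exact ((hiv q).2 w w').mpr he
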